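/- arXiv:2509.14071 — 2 statements merged into one kernel-verified Lean document; each statement's English description precedes it below -/
import Mathlib

section
/- With L_{i,j}(v) as above, for all i ≥ 1 and j ≥ 0: -2 β_i(-v) β_{i-1}(-v) * sum over k from 0 to j of (L_{i,k}(v) - 2 β_i(v) β_{i-1}(v) L_{i-1,k}(v)) * w_k = L_{i,j}(-v), where w_k = 1 for k < j and w_j = 1/2 - v(-1)^j. -/
noncomputable def betaFn (i : ℕ) (v : ℝ) : ℝ :=
  if i % 4 = 0 then 1 / (1 - 2 * v) else if i % 4 = 2 then 1 / (1 + 2 * v) else 1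

noncomputable def Lcoef : ℕ → ℤ → ℝ → ℝ
  | 0, j, _ => if j = 0 then 1 else 0
  | (i + 1), j, v => (Lcoef i j v + Lcoef i (j - 1) (-v)) * betaFn i v

lemma Lcoef_neg : ∀ (i : ℕ) (j : ℤ) (v : ℝ), j < 0 → Lcoef i j v = 0 := by
  intro i
  induction i with
  | zero => intro j v hj; simp [Lcoef, show j ≠ 0 by omega]
  | succ n ih => intro j v hj; simp [Lcoef, ih j v hj, ih (j-1) (-v) (by omega)]

noncomputable def epsZ (j : ℤ) : ℝ := if Even j then 1 else -1

lemma epsZ_sub_one (j : ℤ) : epsZ (j - 1) = -epsZ j := by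
  have h : Even (j - 1) ↔ ¬ Even j := by
    constructor
    · rintro ⟨k, hk⟩ ⟨l, hl⟩; omega
    · intro h
      rcases Int.even_or_odd j with h'|h'; · exact absurd h' h
      rcases h' with ⟨k, rfl⟩; exact ⟨k, by ring⟩
  by_cases hj : Even j <;> simp [epsZ, hj, h.mpr, h]


lemma epsZ_natCast (j : ℕ) : epsZ (j : ℤ) = (-1 : ℝ) ^ j := by
  by_cases h : Even j
  · simp [epsZ, h, Int.even_coe_nat, h.neg_one_pow]
  · simp [epsZ, Int.even_coe_nat, h, (Nat.not_even_iff_odd.mp h).neg_one_pow]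

lemma betaFn_add_two (i : ℕ) (v : ℝ) : betaFn (i + 1 + 1) v = betaFn i (-v) := by
  have h4 : (i + 1 + 1) % 4 = (i % 4 + 2) % 4 := by omega
  unfold betaFn
  rcases (show i % 4 = 0 ∨ i % 4 = 1 ∨ i % 4 = 2 ∨ i % 4 = 3 by omega) with h|h|h|h <;>
    simp [h4, h] <;> ring_nf

set_option maxHeartbeats 2000000 in
lemma key : ∀ (m : ℕ) (j : ℤ) (v : ℝ), 1 - 2*v ≠ 0 → 1 + 2*v ≠ 0 →
    Lcoef (m+1) j (-v) - Lcoef (m+1) (j-1) (-v) =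
      -2 * betaFn (m+1) (-v) * betaFn m (-v) * (1/2 - v * epsZ j) *
        ((Lcoef (m+1) (j-1) v - 2 * betaFn (m+1) v * betaFn m v * Lcoef m (j-1) v)
          + (Lcoef (m+1) j v - 2 * betaFn (m+1) v * betaFn m v * Lcoef m j v)) := by
  intro m
  induction m with
  | zero =>
    intro j v h1 h2
    by_cases hj0 : j = 0
    · subst hj0
      simp only [Lcoef, betaFn, epsZ]
      norm_num
      field_simp
      ring
    · by_cases hj1 : j = 1
      · subst hj1
        simp only [Lcoef, betaFn, epsZ]
        norm_num [Int.even_iff]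
        exact Or.inr (by ring)
      · by_cases hj2 : j = 2
        · subst hj2
          simp only [Lcoef, betaFn, epsZ]
          norm_num [Int.even_iff]
          field_simp
        · simp [Lcoef, show j ≠ 0 from hj0, show j - 1 ≠ 0 by omega,
            show j - 1 - 1 ≠ 0 by omega]
  | succ n ih =>
    intro j v h1 h2
    have h1' : 1 - 2 * (-v) ≠ 0 := by intro h; apply h2; linarith
    have h2' : 1 + 2 * (-v) ≠ 0 := by intro h; apply h1; linarith
    have h1'' : 1 - v * 2 ≠ 0 := by intro h; apply h1; linarith
    have h2'' : 1 + v * 2 ≠ 0 := by intro h; apply h2; linarith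
    have hA := ih j v h1 h2
    have hB := ih (j-1) (-v) h1' h2'
    simp only [neg_neg, epsZ_sub_one, show j - 1 - 1 = j - 2 from by ring] at hB
    simp only [Lcoef, neg_neg, betaFn_add_two,
      show j - 1 - 1 = j - 2 from by ring, show j - 2 - 1 = j - 3 from by ring] at hA hB ⊢
    rcases (show n % 4 = 0 ∨ n % 4 = 1 ∨ n % 4 = 2 ∨ n % 4 = 3 from by omega) with h|h|h|h
    · have b0 : betaFn n v = 1/(1-2*v) := by simp [betaFn, h]
      have b0' : betaFn n (-v) = 1/(1+2*v) := by simp [betaFn, h]; try ring_nf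
      have b1 : betaFn (n+1) v = 1 := by simp [betaFn, show (n+1) % 4 = 1 from by omega]
      have b1' : betaFn (n+1) (-v) = 1 := by simp [betaFn, show (n+1) % 4 = 1 from by omega]
      simp only [b0, b0', b1, b1'] at hA hB ⊢
      linear_combination (norm := (field_simp; ring1)) hA + hB
    · have b0 : betaFn n v = 1 := by simp [betaFn, h]
      have b0' : betaFn n (-v) = 1 := by simp [betaFn, h]
      have b1 : betaFn (n+1) v = 1/(1+2*v) := by simp [betaFn, show (n+1) % 4 = 2 from by omega]
      have b1' : betaFn (n+1) (-v) = 1/(1-2*v) := by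
        simp [betaFn, show (n+1) % 4 = 2 from by omega]; try ring_nf
      simp only [b0, b0', b1, b1'] at hA hB ⊢
      linear_combination (norm := (field_simp; ring1)) (1/(1-2*v)) * hA + (1/(1-2*v)) * hB
    · have b0 : betaFn n v = 1/(1+2*v) := by simp [betaFn, h]
      have b0' : betaFn n (-v) = 1/(1-2*v) := by simp [betaFn, h]; try ring_nf
      have b1 : betaFn (n+1) v = 1 := by simp [betaFn, show (n+1) % 4 = 3 from by omega]
      have b1' : betaFn (n+1) (-v) = 1 := by simp [betaFn, show (n+1) % 4 = 3 from by omega]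
      simp only [b0, b0', b1, b1'] at hA hB ⊢
      linear_combination (norm := (field_simp; ring1)) hA + hB
    · have b0 : betaFn n v = 1 := by simp [betaFn, h]
      have b0' : betaFn n (-v) = 1 := by simp [betaFn, h]
      have b1 : betaFn (n+1) v = 1/(1-2*v) := by simp [betaFn, show (n+1) % 4 = 0 from by omega]
      have b1' : betaFn (n+1) (-v) = 1/(1+2*v) := by
        simp [betaFn, show (n+1) % 4 = 0 from by omega]; try ring_nf
      simp only [b0, b0', b1, b1'] at hA hB ⊢
      linear_combination (norm := (field_simp; ring1)) (1/(1+2*v)) * hA + (1/(1+2*v)) * hB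

/-- For all `i ≥ 1` and `j ≥ 0`:
`-2 β_i(-v) β_{i-1}(-v) ∑_{k=0}^{j} (L_{i,k}(v) - 2β_i(v)β_{i-1}(v) L_{i-1,k}(v)) w_k = L_{i,j}(-v)`
with `w_k = 1` for `k < j` and `w_j = 1/2 - v(-1)^j`. -/
theorem Lcoef_partial_sum (v : ℝ) (hv : |v| < 1 / 2) (i : ℕ) (hi : 1 ≤ i) (j : ℕ) :
    -2 * betaFn i (-v) * betaFn (i - 1) (-v) *
      ∑ k ∈ Finset.range (j + 1),
        (Lcoef i k v - 2 * betaFn i v * betaFn (i - 1) v * Lcoef (i - 1) k v) *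
          (if k = j then 1 / 2 - v * (-1 : ℝ) ^ j else 1)
    = Lcoef i j (-v) := by
  have habs := abs_lt.mp hv
  have h1 : 1 - 2 * v ≠ 0 := by intro h; nlinarith [habs.1, habs.2]
  have h2 : 1 + 2 * v ≠ 0 := by intro h; nlinarith [habs.1, habs.2]
  obtain ⟨m, rfl⟩ : ∃ m, i = m + 1 := ⟨i - 1, by omega⟩
  simp only [Nat.add_sub_cancel]
  induction j with
  | zero =>
    have hk := key m 0 v h1 h2
    rw [show (0:ℤ) - 1 = -1 from by ring] at hk
    rw [Lcoef_neg (m+1) (-1) (-v) (by norm_num), Lcoef_neg (m+1) (-1) v (by norm_num),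
        Lcoef_neg m (-1) v (by norm_num)] at hk
    simp only [epsZ, Even.zero, if_pos] at hk
    simp only [zero_add, Finset.sum_range_one, Nat.cast_zero, pow_zero, if_true,
      eq_self_iff_true, if_pos]
    linear_combination -hk
  | succ j ihj =>
    have hkey := key m ((j:ℤ) + 1) v h1 h2
    rw [show ((j:ℤ) + 1 - 1) = (j:ℤ) from by ring,
        show ((j:ℤ) + 1) = ((j+1 : ℕ) : ℤ) from by push_cast; ring,
        epsZ_natCast] at hkey
    have hsplit :
        ∑ k ∈ Finset.range (j + 1 + 1),
          (Lcoef (m+1) k v - 2 * betaFn (m+1) v * betaFn m v * Lcoef m k v) *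
            (if k = j + 1 then 1 / 2 - v * (-1 : ℝ) ^ (j+1) else 1)
        = (∑ k ∈ Finset.range (j + 1),
            (Lcoef (m+1) k v - 2 * betaFn (m+1) v * betaFn m v * Lcoef m k v) *
              (if k = j then 1 / 2 - v * (-1 : ℝ) ^ j else 1))
          + (Lcoef (m+1) j v - 2 * betaFn (m+1) v * betaFn m v * Lcoef m j v) *
              (1 - (1 / 2 - v * (-1 : ℝ) ^ j))
          + (Lcoef (m+1) (j+1 : ℕ) v - 2 * betaFn (m+1) v * betaFn m v * Lcoef m (j+1 : ℕ) v) *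
              (1 / 2 - v * (-1 : ℝ) ^ (j+1)) := by
      rw [Finset.sum_range_succ, Finset.sum_range_succ, Finset.sum_range_succ]
      rw [if_pos rfl, if_pos rfl, if_neg (by omega)]
      have e1 : ∑ k ∈ Finset.range j,
          (Lcoef (m+1) k v - 2 * betaFn (m+1) v * betaFn m v * Lcoef m k v) *
            (if k = j + 1 then 1 / 2 - v * (-1 : ℝ) ^ (j+1) else 1)
          = ∑ k ∈ Finset.range j,
          (Lcoef (m+1) k v - 2 * betaFn (m+1) v * betaFn m v * Lcoef m k v) *
            (if k = j then 1 / 2 - v * (-1 : ℝ) ^ j else 1) := by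
        refine Finset.sum_congr rfl (fun k hk => ?_)
        rw [Finset.mem_range] at hk
        rw [if_neg (by omega), if_neg (by omega)]
      rw [e1]; ring
    rw [hsplit]
    linear_combination ihj - hkey
end

section
/- The diagonal entries of the L-array satisfy L_{k,k}(v) = (1-4v^2)^{-⌊k/4⌋} times: 1 if k ≡ 0 mod 4, (1-2v)^{-1} if k ≡ 1 mod 4, (1+2v)^{-1} if k ≡ 2 mod 4, and (1-4v^2)^{-1} if k ≡ 3 mod 4. -/
lemma Lcoef_eq_zero : ∀ (i : ℕ) (j : ℤ) (v : ℝ), (i : ℤ) < j → Lcoef i j v = 0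
  | 0, j, v, h => by
    simp only [Lcoef]
    rw [if_neg (by omega)]
  | (i + 1), j, v, h => by
    simp only [Lcoef]
    rw [Lcoef_eq_zero i j v (by push_cast at h ⊢; omega),
      Lcoef_eq_zero i (j - 1) (-v) (by push_cast at h ⊢; omega)]
    ring

/-- The diagonal entries:
`L_{k,k}(v) = (1-4v²)^{-⌊k/4⌋} · (1, (1-2v)⁻¹, (1+2v)⁻¹, (1-4v²)⁻¹)` according to
`k mod 4 = 0, 1, 2, 3`. -/
theorem Lcoef_diagonal (v : ℝ) (hv : |v| < 1 / 2) (k : ℕ) :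
    Lcoef k k v = ((1 - 4 * v ^ 2)⁻¹) ^ (k / 4) *
      (if k % 4 = 0 then 1
       else if k % 4 = 1 then (1 - 2 * v)⁻¹
       else if k % 4 = 2 then (1 + 2 * v)⁻¹
       else (1 - 4 * v ^ 2)⁻¹) := by
  induction k generalizing v with
  | zero => simp [Lcoef]
  | succ k ih =>
    obtain ⟨hl, hr⟩ := abs_lt.mp hv
    have h1 : (1 : ℝ) - 2 * v ≠ 0 := by nlinarith
    have h2 : (1 : ℝ) + 2 * v ≠ 0 := by nlinarith
    have h3 : (1 : ℝ) - 4 * v ^ 2 ≠ 0 := by nlinarith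
    have hvv : |(-v)| < 1 / 2 := by rwa [abs_neg]
    have hz : ((k : ℤ)) < ((k : ℕ) + 1 : ℕ) := by push_cast; omega
    have key : Lcoef (k + 1) ((k : ℤ) + 1) v = Lcoef k k (-v) * betaFn k v := by
      simp only [Lcoef]
      rw [Lcoef_eq_zero k ((k : ℤ) + 1) v (by omega)]
      norm_num
    have hcast : ((k + 1 : ℕ) : ℤ) = (k : ℤ) + 1 := by push_cast; ring
    rw [hcast, key, ih (-v) hvv]
    have h4 : k % 4 = 0 ∨ k % 4 = 1 ∨ k % 4 = 2 ∨ k % 4 = 3 := by omega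
    rcases h4 with h | h | h | h
    · have q : (k + 1) / 4 = k / 4 := by omega
      have m : (k + 1) % 4 = 1 := by omega
      simp only [betaFn, h, m, q]
      norm_num
    · have q : (k + 1) / 4 = k / 4 := by omega
      have m : (k + 1) % 4 = 2 := by omega
      simp only [betaFn, h, m, q]
      norm_num
    · have q : (k + 1) / 4 = k / 4 := by omega
      have m : (k + 1) % 4 = 3 := by omega
      simp only [betaFn, h, m, q]
      norm_num
      rw [mul_assoc, ← mul_inv]
      congr 2
      ring
    · have q : (k + 1) / 4 = k / 4 + 1 := by omega
      have m : (k + 1) % 4 = 0 := by omega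
      simp only [betaFn, h, m, q]
      norm_num
      rw [← mul_inv, ← pow_succ]
end
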